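/- arXiv:1707.09721 — 2 statements merged into one kernel-verified Lean document; each statement's English description precedes it below -/
import Mathlib

section
/- Let d be an odd positive integer. For all n ≥ 0, Ch_{n,λ}(d) + Ch_{n,λ}(0) = 2·Σ_{a=0}^{d-1} Σ_{m=0}^{n} (-1)^a (a)_{m,λ} S₁(n,m). -/
open Finset PowerSeries

/-- The degenerate falling factorial `(x)_{n,λ}`. -/
noncomputable def df (l x : ℚ) (n : ℕ) : ℚ := ∏ i ∈ Finset.range n, (x - (i : ℚ) * l)

/-- The formal power series `(1+λt)^{x/λ} := Σ (x)_{n,λ} tⁿ/n!`. -/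
noncomputable def B (l x : ℚ) : PowerSeries ℚ :=
  PowerSeries.mk fun n => df l x n / n.factorial

/-- Signed Stirling numbers of the first kind. -/
def S1 : ℕ → ℕ → ℚ
  | 0, 0 => 1
  | 0, _ + 1 => 0
  | _ + 1, 0 => 0
  | n + 1, k + 1 => S1 n k - (n : ℚ) * S1 n (k + 1)

/-- Stirling numbers of the second kind. -/
def S2 : ℕ → ℕ → ℚ
  | 0, 0 => 1
  | 0, _ + 1 => 0
  | _ + 1, 0 => 0
  | n + 1, k + 1 => ((k : ℚ) + 1) * S2 n (k + 1) + S2 n k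

/-- Degenerate Changhee polynomials of the second kind, built from a family `E`
(intended: Carlitz degenerate Euler polynomials): `Ch_{n,λ}(x) = Σ_{l≤n} S₁(n,l) E_{l,λ}(x)`. -/
noncomputable def Ch (E : ℕ → ℚ → ℚ) (n : ℕ) (x : ℚ) : ℚ :=
  ∑ m ∈ Finset.range (n + 1), S1 n m * E m x

lemma df_zero (l x : ℚ) : df l x 0 = 1 := by simp [df]

lemma df_succ (l x : ℚ) (n : ℕ) : df l x (n + 1) = df l x n * (x - n * l) := by
  simp [df, Finset.prod_range_succ]

lemma df_add (l x y : ℚ) : ∀ n : ℕ,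
    df l (x + y) n = ∑ k ∈ range (n + 1), (n.choose k : ℚ) * (df l x k * df l y (n - k)) := by
  intro n
  induction n with
  | zero => simp [df]
  | succ n ih =>
    have hA : ∑ k ∈ range (n + 2), ((n + 1).choose k : ℚ) * (df l x k * df l y (n + 1 - k))
        = ∑ k ∈ range (n + 1), (n.choose k : ℚ) * (df l x (k+1) * df l y (n - k))
        + ∑ k ∈ range (n + 1), (n.choose k : ℚ) * (df l x k * df l y (n + 1 - k)) := by
      rw [Finset.sum_range_succ' _ (n+1)]
      have h1 : ∀ k ∈ range (n + 1),
          (((n + 1).choose (k+1) : ℚ)) * (df l x (k+1) * df l y (n + 1 - (k+1)))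
          = (n.choose k : ℚ) * (df l x (k+1) * df l y (n - k))
          + (n.choose (k+1) : ℚ) * (df l x (k+1) * df l y (n - k)) := by
        intro k hk
        have : (n + 1).choose (k+1) = n.choose k + n.choose (k+1) := Nat.choose_succ_succ n k
        rw [this]
        push_cast
        ring
      rw [Finset.sum_congr rfl h1, Finset.sum_add_distrib]
      have h2 : ∑ k ∈ range (n + 1), (n.choose (k+1) : ℚ) * (df l x (k+1) * df l y (n - k))
          + ((n+1).choose 0 : ℚ) * (df l x 0 * df l y (n + 1 - 0))
          = ∑ k ∈ range (n + 1), (n.choose k : ℚ) * (df l x k * df l y (n + 1 - k)) := by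
        rw [Finset.sum_range_succ' (fun k => (n.choose k : ℚ) * (df l x k * df l y (n + 1 - k))) n,
          Finset.sum_range_succ]
        simp [Nat.choose_succ_self, Nat.succ_sub_succ]
      rw [add_assoc, h2]
    rw [hA]
    have hstep : ∑ k ∈ range (n + 1), (n.choose k : ℚ) * (df l x (k+1) * df l y (n - k))
        + ∑ k ∈ range (n + 1), (n.choose k : ℚ) * (df l x k * df l y (n + 1 - k))
        = ∑ k ∈ range (n + 1), (n.choose k : ℚ) * (df l x k * df l y (n - k)) * (x + y - n * l) := by
      rw [← Finset.sum_add_distrib]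
      apply Finset.sum_congr rfl
      intro k hk
      have hk' : k ≤ n := by simpa [Nat.lt_succ_iff] using hk
      have h3 : n + 1 - k = (n - k) + 1 := by omega
      rw [df_succ, h3, df_succ]
      have h4 : ((n - k : ℕ) : ℚ) = (n : ℚ) - (k : ℚ) := by
        rw [Nat.cast_sub hk']
      rw [h4]; ring
    rw [hstep, ← Finset.sum_mul, ← ih, ← df_succ]

lemma coeff_B (l x : ℚ) (n : ℕ) : PowerSeries.coeff (R := ℚ) n (B l x) = df l x n / n.factorial := by
  simp [B]

lemma B_mul (l x y : ℚ) : B l x * B l y = B l (x + y) := by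
  ext n
  rw [PowerSeries.coeff_mul, coeff_B, Finset.Nat.sum_antidiagonal_eq_sum_range_succ
    (fun i j => PowerSeries.coeff (R := ℚ) i (B l x) * PowerSeries.coeff (R := ℚ) j (B l y))]
  rw [df_add, Finset.sum_div]
  apply Finset.sum_congr rfl
  intro k hk
  have hk' : k ≤ n := by simpa [Nat.lt_succ_iff] using hk
  rw [coeff_B, coeff_B]
  rw [Nat.cast_choose ℚ hk']
  have h1 : (k.factorial : ℚ) ≠ 0 := Nat.cast_ne_zero.mpr k.factorial_ne_zero
  have h2 : ((n-k).factorial : ℚ) ≠ 0 := Nat.cast_ne_zero.mpr (n-k).factorial_ne_zero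
  have h3 : (n.factorial : ℚ) ≠ 0 := Nat.cast_ne_zero.mpr n.factorial_ne_zero
  field_simp

lemma B_zero (l : ℚ) : B l 0 = 1 := by
  ext n
  rw [coeff_B]
  cases n with
  | zero => simp [df_zero]
  | succ n =>
    have : df l 0 (n+1) = 0 := by
      apply Finset.prod_eq_zero (Finset.mem_range.mpr (Nat.succ_pos n))
      simp
    simp [this]

lemma B_nat (l : ℚ) : ∀ d : ℕ, B l d = B l 1 ^ d := by
  intro d
  induction d with
  | zero => simpa using B_zero l
  | succ d ih =>
    have : ((d + 1 : ℕ) : ℚ) = (d : ℚ) + 1 := by push_cast; ring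
    rw [this, ← B_mul, ih, pow_succ]

lemma geom_odd {R : Type*} [CommRing R] (x : R) (d : ℕ) (hd : Odd d) :
    (∑ a ∈ range d, (-1 : R) ^ a * x ^ a) * (x + 1) = x ^ d + 1 := by
  have h := geom_sum_mul (-x) d
  have h2 : ∀ a, (-1 : R) ^ a * x ^ a = (-x) ^ a := by
    intro a; rw [← neg_one_mul x, mul_pow]
  simp only [h2]
  have : (x + 1 : R) = -((-x) - 1) := by ring
  rw [this, mul_neg, h, hd.neg_pow]
  ring

lemma Bone_ne (l : ℚ) : (B l 1 + 1 : PowerSeries ℚ) ≠ 0 := by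
  intro h
  have := congrArg (PowerSeries.constantCoeff (R := ℚ)) h
  simp only [map_add, map_one, map_zero] at this
  rw [← PowerSeries.coeff_zero_eq_constantCoeff, coeff_B] at this
  simp [df] at this

lemma sum_series (l : ℚ) (d : ℕ) :
    (∑ a ∈ range d, (-1 : PowerSeries ℚ) ^ a * B l a)
      = PowerSeries.mk fun m => (∑ a ∈ range d, (-1 : ℚ) ^ a * df l a m) / m.factorial := by
  ext m
  rw [map_sum, PowerSeries.coeff_mk, Finset.sum_div]
  apply Finset.sum_congr rfl
  intro a _
  have h1 : ((-1 : PowerSeries ℚ) ^ a) = PowerSeries.C (R := ℚ) ((-1 : ℚ) ^ a) := by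
    rw [map_pow, map_neg, map_one]
  rw [h1, PowerSeries.coeff_C_mul, coeff_B, mul_div_assoc]

lemma euler_add (l : ℚ) (d : ℕ) (hd : Odd d) (E : ℕ → ℚ → ℚ)
    (hE : ∀ x : ℚ, (PowerSeries.mk fun n => E n x / n.factorial) * (B l 1 + 1) = 2 * B l x) :
    ∀ m : ℕ, E m d + E m 0 = 2 * ∑ a ∈ range d, (-1 : ℚ) ^ a * df l a m := by
  have key : ((PowerSeries.mk fun n => E n (d : ℚ) / n.factorial)
        + PowerSeries.mk fun n => E n 0 / n.factorial) * (B l 1 + 1)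
      = (2 * ∑ a ∈ range d, (-1 : PowerSeries ℚ) ^ a * B l a) * (B l 1 + 1) := by
    rw [add_mul, hE, hE, B_zero, B_nat]
    have hs : ∀ a ∈ range d, (-1 : PowerSeries ℚ) ^ a * B l a
        = (-1 : PowerSeries ℚ) ^ a * (B l 1) ^ a := fun a _ => by rw [B_nat]
    rw [Finset.sum_congr rfl hs, mul_assoc, geom_odd _ d hd]
    ring
  have key2 := mul_right_cancel₀ (Bone_ne l) key
  intro m
  have hc := congrArg (PowerSeries.coeff (R := ℚ) m) key2
  rw [map_add, PowerSeries.coeff_mk, PowerSeries.coeff_mk, sum_series] at hc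
  have h2 : (2 : PowerSeries ℚ) = PowerSeries.C (R := ℚ) 2 := by
    rw [map_ofNat]
  rw [h2, PowerSeries.coeff_C_mul, PowerSeries.coeff_mk] at hc
  have hf : ((m.factorial : ℚ)) ≠ 0 := Nat.cast_ne_zero.mpr m.factorial_ne_zero
  field_simp at hc
  linarith [hc]

/-- For odd `d ≥ 1`: `Ch_{n,λ}(d) + Ch_{n,λ}(0) = 2 Σ_{a<d} Σ_{m≤n} (-1)^a (a)_{m,λ} S₁(n,m)`. -/
theorem stmt8 (l : ℚ) (d : ℕ) (hd0 : 0 < d) (hd : Odd d) (E : ℕ → ℚ → ℚ)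
    (hE : ∀ x : ℚ, (PowerSeries.mk fun n => E n x / n.factorial) * (B l 1 + 1)
      = 2 * B l x) :
    ∀ n : ℕ, Ch E n d + Ch E n 0 =
      2 * ∑ a ∈ Finset.range d, ∑ m ∈ Finset.range (n + 1),
        (-1 : ℚ) ^ a * df l a m * S1 n m := by
  intro n
  have hEu := euler_add l d hd E hE
  unfold Ch
  rw [← Finset.sum_add_distrib, Finset.sum_comm, Finset.mul_sum]
  apply Finset.sum_congr rfl
  intro m _
  rw [← mul_add, hEu m, Finset.mul_sum, Finset.mul_sum, Finset.mul_sum]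
  apply Finset.sum_congr rfl
  intro a _
  ring
end

section
/- For all r ≥ 1 and n ≥ 0, Ch^{(r)}_{n,λ}(x) = Σ_{k=0}^{n} Σ_{m=0}^{k} C(n,k) · (x)_{m,λ} · S₁(k,m) · Ch^{(r)}_{n-k,λ}, expressing the higher-order degenerate Changhee polynomials of the second kind in terms of the corresponding numbers. -/
open Finset PowerSeries

lemma S1_zero_right (n : ℕ) : S1 (n+1) 0 = 0 := rfl

lemma S1_eq_zero : ∀ n m, n < m → S1 n m = 0 := by
  intro n
  induction n with
  | zero => intro m hm; match m, hm with | m+1, _ => rfl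
  | succ n ih =>
    intro m hm
    match m, hm with
    | k+1, hm =>
      show S1 n k - (n:ℚ) * S1 n (k+1) = 0
      rw [ih k (by omega), ih (k+1) (by omega)]
      ring

lemma A_id : ∀ n j p : ℕ, ∑ k ∈ range (n+1), (n.choose k : ℚ) * S1 k j * S1 (n-k) p
    = ((j+p).choose j : ℚ) * S1 n (j+p) := by
  intro n
  induction n with
  | zero =>
    intro j p
    have hred : ∑ k ∈ range (0+1), ((0:ℕ).choose k : ℚ) * S1 k j * S1 (0-k) p
        = S1 0 j * S1 0 p := by simp
    rw [hred]
    match j, p with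
    | 0, 0 => simp [S1]
    | j+1, p => rw [S1_eq_zero 0 (j+1) (by omega), S1_eq_zero 0 (j+1+p) (by omega)]; ring
    | 0, p+1 => rw [S1_eq_zero 0 (p+1) (by omega), S1_eq_zero 0 (0+(p+1)) (by omega)]; ring
  | succ n ih =>
    intro j p
    match j, p with
    | 0, p =>
      rw [Finset.sum_eq_single 0]
      · simp [S1]
      · intro k hk hk0
        match k, hk0 with
        | k+1, _ => show _ * S1 (k+1) 0 * _ = 0; rw [S1_zero_right]; ring
      · simp
    | i+1, 0 =>
      rw [Finset.sum_eq_single (n+1)]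
      · simp [S1]
      · intro k hk hk0
        have : n + 1 - k ≠ 0 := by simp at hk; omega
        match h : n + 1 - k, this with
        | m+1, _ => show _ * _ * S1 (m+1) 0 = 0; rw [S1_zero_right]; ring
      · simp
    | i+1, q+1 =>
      have step : ∑ k ∈ range (n+2), ((n+1).choose k : ℚ) * S1 k (i+1) * S1 (n+1-k) (q+1)
          = ∑ k ∈ range (n+1), (n.choose k : ℚ) * S1 (k+1) (i+1) * S1 (n-k) (q+1)
            + ∑ k ∈ range (n+1), (n.choose k : ℚ) * S1 k (i+1) * S1 (n+1-k) (q+1) := by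
        rw [Finset.sum_range_succ' _ (n+1)]
        have h1 : ∀ k ∈ range (n+1), ((n+1).choose (k+1) : ℚ) * S1 (k+1) (i+1) * S1 (n+1-(k+1)) (q+1)
            = (n.choose k : ℚ) * S1 (k+1) (i+1) * S1 (n-k) (q+1)
              + (n.choose (k+1) : ℚ) * S1 (k+1) (i+1) * S1 (n-k) (q+1) := by
          intro k hk
          have : n + 1 - (k+1) = n - k := by omega
          rw [this, Nat.choose_succ_succ, Nat.cast_add]; ring
        rw [Finset.sum_congr rfl h1, Finset.sum_add_distrib]
        have h2 : ∑ k ∈ range (n+1), (n.choose (k+1) : ℚ) * S1 (k+1) (i+1) * S1 (n-k) (q+1)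
            = ∑ k ∈ range (n+1), (n.choose (k+1) : ℚ) * S1 (k+1) (i+1) * S1 (n+1-(k+1)) (q+1) := by
          apply Finset.sum_congr rfl; intro k hk; congr 2; omega
        have h3 : ∑ k ∈ range (n+2), (n.choose k : ℚ) * S1 k (i+1) * S1 (n+1-k) (q+1)
            = ∑ k ∈ range (n+1), (n.choose (k+1) : ℚ) * S1 (k+1) (i+1) * S1 (n+1-(k+1)) (q+1)
              + (n.choose 0 : ℚ) * S1 0 (i+1) * S1 (n+1-0) (q+1) := Finset.sum_range_succ' _ (n+1)
        have h4 : ∑ k ∈ range (n+2), (n.choose k : ℚ) * S1 k (i+1) * S1 (n+1-k) (q+1)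
            = ∑ k ∈ range (n+1), (n.choose k : ℚ) * S1 k (i+1) * S1 (n+1-k) (q+1) := by
          rw [Finset.sum_range_succ]
          simp [Nat.choose_succ_self]
        have h5 : ((n+1).choose 0 : ℚ) * S1 0 (i+1) * S1 (n+1-0) (q+1)
            = (n.choose 0 : ℚ) * S1 0 (i+1) * S1 (n+1-0) (q+1) := by simp
        rw [h5, ← h2] at *
        linarith [h3, h4]
      rw [step]
      have e1 : ∀ k ∈ range (n+1), (n.choose k : ℚ) * S1 (k+1) (i+1) * S1 (n-k) (q+1)
          = (n.choose k : ℚ) * S1 k i * S1 (n-k) (q+1)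
            - (k:ℚ) * ((n.choose k : ℚ) * S1 k (i+1) * S1 (n-k) (q+1)) := by
        intro k hk
        show (n.choose k : ℚ) * (S1 k i - (k:ℚ) * S1 k (i+1)) * S1 (n-k) (q+1) = _
        ring
      have e2 : ∀ k ∈ range (n+1), (n.choose k : ℚ) * S1 k (i+1) * S1 (n+1-k) (q+1)
          = (n.choose k : ℚ) * S1 k (i+1) * S1 (n-k) q
            - ((n:ℚ)-(k:ℚ)) * ((n.choose k : ℚ) * S1 k (i+1) * S1 (n-k) (q+1)) := by
        intro k hk
        simp only [mem_range] at hk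
        have h6 : n + 1 - k = (n-k)+1 := by omega
        have h7 : ((n-k : ℕ) : ℚ) = (n:ℚ) - (k:ℚ) := by
          push_cast [Nat.cast_sub (by omega : k ≤ n)]; ring
        rw [h6]
        show (n.choose k : ℚ) * S1 k (i+1) * (S1 (n-k) q - ((n-k:ℕ):ℚ) * S1 (n-k) (q+1)) = _
        rw [h7]; ring
      rw [Finset.sum_congr rfl e1, Finset.sum_congr rfl e2, Finset.sum_sub_distrib,
        Finset.sum_sub_distrib]
      have comb : ∀ k ∈ range (n+1), (k:ℚ) * ((n.choose k : ℚ) * S1 k (i+1) * S1 (n-k) (q+1))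
            + ((n:ℚ)-(k:ℚ)) * ((n.choose k : ℚ) * S1 k (i+1) * S1 (n-k) (q+1))
          = (n:ℚ) * ((n.choose k : ℚ) * S1 k (i+1) * S1 (n-k) (q+1)) := by
        intro k hk; ring
      have hA1 := ih i (q+1)
      have hA2 := ih (i+1) q
      have hA3 := ih (i+1) (q+1)
      simp only [show i+(q+1) = i+q+1 from by omega] at hA1
      simp only [show i+1+q = i+q+1 from by omega] at hA2
      simp only [show i+1+(q+1) = i+q+2 from by omega] at hA3
      have hsum : ∑ k ∈ range (n+1), (k:ℚ) * ((n.choose k : ℚ) * S1 k (i+1) * S1 (n-k) (q+1))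
            + ∑ k ∈ range (n+1), ((n:ℚ)-(k:ℚ)) * ((n.choose k : ℚ) * S1 k (i+1) * S1 (n-k) (q+1))
          = (n:ℚ) * (((i+q+2).choose (i+1) : ℚ) * S1 n (i+q+2)) := by
        rw [← Finset.sum_add_distrib, Finset.sum_congr rfl comb, ← Finset.mul_sum, hA3]
      simp only [show i+1+(q+1) = i+q+2 from by omega]
      have target : S1 (n+1) (i+q+2) = S1 n (i+q+1) - (n:ℚ) * S1 n (i+q+2) := by
        have h8 : i+q+2 = (i+q+1)+1 := by omega
        rw [h8]; rfl
      have hpascal : ((i+q+2).choose (i+1) : ℚ)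
          = ((i+q+1).choose i : ℚ) + ((i+q+1).choose (i+1) : ℚ) := by
        have h9 : (i+q+2) = (i+q+1)+1 := by omega
        rw [h9, Nat.choose_succ_succ']
        push_cast; ring
      rw [hpascal] at hsum
      rw [hA1, hA2, target, hpascal]
      linear_combination -hsum

lemma E_expand (l : ℚ) (r : ℕ) (E : ℕ → ℚ → ℚ)
    (hE : ∀ x : ℚ, (PowerSeries.mk fun n => E n x / n.factorial) * (B l 1 + 1) ^ r
      = 2 ^ r * B l x) :
    ∀ m (x : ℚ), E m x = ∑ j ∈ Finset.range (m+1),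
      (m.choose j : ℚ) * df l x j * E (m-j) 0 := by
  have hne : (B l 1 + 1 : PowerSeries ℚ) ≠ 0 := by
    intro h
    have := congrArg (PowerSeries.constantCoeff) h
    simp only [map_add, map_one, map_zero] at this
    rw [show PowerSeries.constantCoeff (B l 1) = 1 by simp [B, df, coeff_zero_eq_constantCoeff.symm, PowerSeries.coeff_mk]] at this
    norm_num at this
  have h0 : (PowerSeries.mk fun n => E n 0 / n.factorial) * (B l 1 + 1) ^ r = 2 ^ r := by
    rw [hE 0, B_zero, mul_one]
  have key : ∀ x : ℚ, (PowerSeries.mk fun n => E n x / n.factorial)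
      = B l x * (PowerSeries.mk fun n => E n 0 / n.factorial) := by
    intro x
    have := hE x
    rw [← h0] at this
    have h2 : (PowerSeries.mk fun n => E n x / n.factorial) * (B l 1 + 1) ^ r
        = (B l x * PowerSeries.mk fun n => E n 0 / n.factorial) * (B l 1 + 1) ^ r := by
      rw [this]; ring
    exact mul_right_cancel₀ (pow_ne_zero r hne) h2
  intro m x
  have hc := congrArg (PowerSeries.coeff m) (key x)
  rw [PowerSeries.coeff_mk, PowerSeries.coeff_mul] at hc
  rw [Finset.Nat.sum_antidiagonal_eq_sum_range_succ (fun a b =>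
    (PowerSeries.coeff a (B l x)) * (PowerSeries.coeff b (PowerSeries.mk fun n => E n 0 / n.factorial)))] at hc
  simp only [B, PowerSeries.coeff_mk] at hc
  have hm : (m.factorial : ℚ) ≠ 0 := Nat.cast_ne_zero.mpr m.factorial_ne_zero
  have := congrArg (fun y => (m.factorial : ℚ) * y) hc
  simp only [Finset.mul_sum] at this
  calc E m x = (m.factorial : ℚ) * (E m x / m.factorial) := by field_simp
    _ = ∑ i ∈ Finset.range m.succ,
        (m.factorial : ℚ) * (df l x i / i.factorial * (E (m-i) 0 / (m-i).factorial)) := this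
    _ = ∑ j ∈ Finset.range (m+1), (m.choose j : ℚ) * df l x j * E (m-j) 0 := by
        apply Finset.sum_congr rfl
        intro i hi
        have hle : i ≤ m := Nat.lt_succ_iff.mp (Finset.mem_range.mp hi)
        rw [Nat.cast_choose ℚ hle]
        have h1 : (i.factorial : ℚ) ≠ 0 := Nat.cast_ne_zero.mpr i.factorial_ne_zero
        have h2 : ((m-i).factorial : ℚ) ≠ 0 := Nat.cast_ne_zero.mpr (m-i).factorial_ne_zero
        field_simp

lemma inner_id (n j : ℕ) (d : ℚ) (g : ℕ → ℚ) :
    ∑ m ∈ range (n+1), S1 n m * ((m.choose j : ℚ) * d * g (m-j))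
    = ∑ p ∈ range (n+1), ((j+p).choose j : ℚ) * S1 n (j+p) * d * g p := by
  by_cases hj : j ≤ n
  · have hsplit : ∑ m ∈ range (n+1), S1 n m * ((m.choose j : ℚ) * d * g (m-j))
        = ∑ m ∈ Finset.Ico j (n+1), S1 n m * ((m.choose j : ℚ) * d * g (m-j)) := by
      rw [range_eq_Ico, ← Finset.sum_Ico_consecutive _ (Nat.zero_le j) (by omega)]
      have hz : ∑ m ∈ Finset.Ico 0 j, S1 n m * ((m.choose j : ℚ) * d * g (m-j)) = 0 := by
        apply Finset.sum_eq_zero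
        intro m hm
        simp only [Finset.mem_Ico] at hm
        rw [Nat.choose_eq_zero_of_lt hm.2]
        simp
      rw [hz, zero_add]
    rw [hsplit, Finset.sum_Ico_eq_sum_range]
    have hre : ∀ p ∈ range (n+1-j), S1 n (j+p) * (((j+p).choose j : ℚ) * d * g (j+p-j))
        = ((j+p).choose j : ℚ) * S1 n (j+p) * d * g p := by
      intro p hp
      rw [show j+p-j = p from by omega]
      ring
    rw [Finset.sum_congr rfl hre]
    apply Finset.sum_subset
    · apply Finset.range_subset_range.mpr; omega
    · intro p hp hnp
      simp only [mem_range] at hp hnp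
      rw [S1_eq_zero n (j+p) (by omega)]
      ring
  · rw [Finset.sum_eq_zero, Finset.sum_eq_zero]
    · intro p hp
      rw [S1_eq_zero n (j+p) (by omega)]
      ring
    · intro m hm
      simp only [mem_range] at hm
      rw [Nat.choose_eq_zero_of_lt (by omega)]
      simp

/-- `Ch⁽ʳ⁾_{n,λ}(x) = Σ_{k≤n} Σ_{m≤k} C(n,k) (x)_{m,λ} S₁(k,m) Ch⁽ʳ⁾_{n-k,λ}`. -/
theorem stmt16 (l : ℚ) (r : ℕ) (hr : 1 ≤ r) (E : ℕ → ℚ → ℚ)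
    (hE : ∀ x : ℚ, (PowerSeries.mk fun n => E n x / n.factorial) * (B l 1 + 1) ^ r
      = 2 ^ r * B l x) :
    ∀ (n : ℕ) (x : ℚ), Ch E n x =
      ∑ k ∈ Finset.range (n + 1), ∑ m ∈ Finset.range (k + 1),
        (n.choose k : ℚ) * df l x m * S1 k m * Ch E (n - k) 0 := by
  intro n x
  have hEe := E_expand l r E hE
  -- LHS transformation
  have hL : Ch E n x = ∑ j ∈ range (n+1), ∑ p ∈ range (n+1),
      ((j+p).choose j : ℚ) * S1 n (j+p) * df l x j * E p 0 := by
    rw [Ch]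
    have step1 : ∀ m ∈ range (n+1), S1 n m * E m x
        = ∑ j ∈ range (n+1), S1 n m * ((m.choose j : ℚ) * df l x j * E (m-j) 0) := by
      intro m hm
      simp only [mem_range] at hm
      rw [hEe m x, Finset.mul_sum]
      apply Finset.sum_subset
      · apply Finset.range_subset_range.mpr; omega
      · intro j hj hnj
        simp only [mem_range] at hj hnj
        rw [Nat.choose_eq_zero_of_lt (by omega)]
        ring
    rw [Finset.sum_congr rfl step1, Finset.sum_comm]
    apply Finset.sum_congr rfl
    intro j hj
    exact inner_id n j (df l x j) (fun p => E p 0)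
  rw [hL]
  -- RHS transformation
  have hR : ∀ k ∈ range (n+1), ∑ m ∈ Finset.range (k + 1),
        (n.choose k : ℚ) * df l x m * S1 k m * Ch E (n - k) 0
      = ∑ m ∈ range (n+1), ∑ p ∈ range (n+1),
        (df l x m * E p 0) * ((n.choose k : ℚ) * S1 k m * S1 (n-k) p) := by
    intro k hk
    simp only [mem_range] at hk
    have hCh : Ch E (n-k) 0 = ∑ p ∈ range (n+1), S1 (n-k) p * E p 0 := by
      rw [Ch]
      apply Finset.sum_subset
      · apply Finset.range_subset_range.mpr; omega
      · intro p hp hnp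
        simp only [mem_range] at hp hnp
        rw [S1_eq_zero (n-k) p (by omega)]
        ring
    have ext_m : ∑ m ∈ Finset.range (k + 1),
          (n.choose k : ℚ) * df l x m * S1 k m * Ch E (n - k) 0
        = ∑ m ∈ range (n+1), (n.choose k : ℚ) * df l x m * S1 k m * Ch E (n - k) 0 := by
      apply Finset.sum_subset
      · apply Finset.range_subset_range.mpr; omega
      · intro m hm hnm
        simp only [mem_range] at hm hnm
        rw [S1_eq_zero k m (by omega)]
        ring
    rw [ext_m]
    apply Finset.sum_congr rfl
    intro m hm
    rw [hCh, Finset.mul_sum]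
    apply Finset.sum_congr rfl
    intro p hp
    ring
  have hR2 : ∑ k ∈ Finset.range (n + 1), ∑ m ∈ Finset.range (k + 1),
        (n.choose k : ℚ) * df l x m * S1 k m * Ch E (n - k) 0
      = ∑ j ∈ range (n+1), ∑ p ∈ range (n+1),
        ((j+p).choose j : ℚ) * S1 n (j+p) * df l x j * E p 0 := by
    rw [Finset.sum_congr rfl hR]
    calc ∑ k ∈ range (n+1), ∑ m ∈ range (n+1), ∑ p ∈ range (n+1),
          (df l x m * E p 0) * ((n.choose k : ℚ) * S1 k m * S1 (n-k) p)
        = ∑ m ∈ range (n+1), ∑ k ∈ range (n+1), ∑ p ∈ range (n+1),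
          (df l x m * E p 0) * ((n.choose k : ℚ) * S1 k m * S1 (n-k) p) := Finset.sum_comm
      _ = ∑ m ∈ range (n+1), ∑ p ∈ range (n+1), ∑ k ∈ range (n+1),
          (df l x m * E p 0) * ((n.choose k : ℚ) * S1 k m * S1 (n-k) p) :=
          Finset.sum_congr rfl (fun m _ => Finset.sum_comm)
      _ = ∑ j ∈ range (n+1), ∑ p ∈ range (n+1),
          ((j+p).choose j : ℚ) * S1 n (j+p) * df l x j * E p 0 := by
          apply Finset.sum_congr rfl
          intro m hm
          apply Finset.sum_congr rfl
          intro p hp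
          rw [← Finset.mul_sum, A_id n m p]
          ring
  rw [hR2]
end
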